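/- arXiv:0902.1571 — 2 statements merged into one kernel-verified Lean document; each statement's English description precedes it below -/
import Mathlib

section
/- Let (a_n)_{n≥1} with a_n ≥ 0 and (b_n)_{n≥1} ⊆ ℝ be the parameters of a half-line Jacobi matrix (with the convention a_0 = 0), so that the first and second moments of the spectral measures μ_n satisfy ∫x dμ_n(x) = b_n and ∫x² dμ_n(x) = a_{n−1}² + b_n² + a_n². Suppose lim_{n→∞} b_n = B̃ and lim_{n→∞} (a_{n−1}² + b_n² + a_n²) = Ã. Then the sequences (a_n) and (b_n) are bounded (so the Jacobi matrix is a bounded operator), and every right limit of the parameter sequence lies in the class 𝒮(Ã − B̃², B̃): for every pair of doubly infinite sequences ((ã_n), (b̃_n))_{n∈ℤ} obtained as pointwise limits ã_n = lim_j a_{n+n_j}, b̃_n = lim_j b_{n+n_j} along some integers n_j → ∞, there exist constants a, c ≥ 0 with a² + c² = Ã − B̃² such that ã_{2n} = a, ã_{2n+1} = c, and b̃_n = B̃ for all n ∈ ℤ. -/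
open MeasureTheory Filter Metric Complex Set Topology

noncomputable section

/-- A Schur function: analytic on the open unit disc with modulus bounded by one. -/
def IsSchur (f : ℂ → ℂ) : Prop :=
  DifferentiableOn ℂ f (ball (0:ℂ) 1) ∧ ∀ z ∈ ball (0:ℂ) 1, ‖f z‖ ≤ 1

/-- `f` is the Schur function whose Schur parameter sequence is `α`; the Schur
algorithm recursion is imposed at every step whose parameter has modulus `< 1`
(at a parameter of modulus one the algorithm terminates, and indeed the condition
`g n 0 = α n` with `g n` Schur then forces `g n` to be the constant `α n`). -/
def HasSchurParams (f : ℂ → ℂ) (α : ℕ → ℂ) : Prop :=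
  ∃ g : ℕ → ℂ → ℂ, g 0 = f ∧ (∀ n, IsSchur (g n)) ∧ (∀ n, g n 0 = α n) ∧
    ∀ n, ‖α n‖ < 1 → ∀ z ∈ ball (0:ℂ) 1,
      z * g (n+1) z * (1 - (starRingEnd ℂ) (α n) * g n z) = g n z - α n

/-- The radial limit of `f` at the boundary point `z` equals `L`. -/
def RadialLimit (f : ℂ → ℂ) (z L : ℂ) : Prop :=
  Tendsto (fun r : ℝ => f ((r : ℂ) * z)) (nhdsWithin 1 (Set.Iio 1)) (𝓝 L)

/-- The set of angles `θ ∈ [0, 2π)` whose corresponding point `e^{iθ}` lies in `S ⊆ ∂𝔻`. -/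
def circleSet (S : Set ℂ) : Set ℝ :=
  {θ : ℝ | θ ∈ Set.Ico 0 (2 * Real.pi) ∧ Complex.exp (θ * Complex.I) ∈ S}

/-- Harmonic measure `ω_z(S)` of a Borel set `S ⊆ ∂𝔻` at `z ∈ 𝔻`. -/
def omega (z : ℂ) (S : Set ℂ) : ℝ :=
  ∫ θ in circleSet S,
    ((Complex.exp (θ * Complex.I) + z) / (Complex.exp (θ * Complex.I) - z)).re / (2 * Real.pi)

/-- The radial boundary value `ω_{f(e^{iθ})}(S) = lim_{r↑1} ω_{f(re^{iθ})}(S)`. -/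
def omegaBdry (f : ℂ → ℂ) (S : Set ℂ) (θ : ℝ) : ℝ :=
  limUnder (nhdsWithin (1:ℝ) (Set.Iio 1))
    (fun r : ℝ => omega (f ((r:ℂ) * Complex.exp (θ * Complex.I))) S)

/-- The reversed (Szegő) polynomial `P*(z) = z^n conj(P(1/conj z))` of a degree-`n` polynomial. -/
def szegoRev (n : ℕ) (P : Polynomial ℂ) : Polynomial ℂ :=
  (P.map (starRingEnd ℂ)).reflect n

/-- `α` is the Verblunsky coefficient sequence of the measure `μ` on the unit circle
(parametrized by `θ ∈ [0,2π)`): `Φ` are the monic orthogonal polynomials obtained by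
Gram–Schmidt from `1, z, z², …` in `L²(∂𝔻, dμ)` and the Szegő recursion
`Φ_{n+1}(z) = z Φ_n(z) - conj(α_n) Φ_n*(z)` holds. -/
def IsVerblunsky (μ : Measure ℝ) (Φ : ℕ → Polynomial ℂ) (α : ℕ → ℂ) : Prop :=
  (∀ n, (Φ n).Monic) ∧ (∀ n, (Φ n).natDegree = n) ∧
  (∀ n m : ℕ, m < n →
    ∫ θ, (Φ n).eval (Complex.exp (θ * Complex.I)) *
      (starRingEnd ℂ) (Complex.exp (θ * Complex.I)) ^ m ∂μ = 0) ∧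
  (∀ n, ‖α n‖ < 1) ∧
  (∀ n, Φ (n + 1) =
    Polynomial.X * Φ n - Polynomial.C ((starRingEnd ℂ) (α n)) * szegoRev n (Φ n))

/-- `β : ℤ → ℂ` is a right limit of the half-line sequence `α`. -/
def IsRightLimit (α : ℕ → ℂ) (β : ℤ → ℂ) : Prop :=
  ∃ nj : ℕ → ℕ, Tendsto nj atTop atTop ∧
    ∀ n : ℤ, Tendsto (fun j => α (n + nj j).toNat) atTop (𝓝 (β n))

/-- The `L²(μ)` norm of the boundary values of the polynomial `P`. -/
def opucNorm (μ : Measure ℝ) (P : Polynomial ℂ) : ℝ :=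
  Real.sqrt (∫ θ, ‖P.eval (Complex.exp (θ * Complex.I))‖ ^ 2 ∂μ)

/-- The measure `|φ|² dμ`, where `φ = P / ‖P‖_{L²(μ)}` is the normalized polynomial. -/
def diagMeasure (μ : Measure ℝ) (P : Polynomial ℂ) : Measure ℝ :=
  μ.withDensity (fun θ => ENNReal.ofReal
    (‖P.eval (Complex.exp (θ * Complex.I)) / ((opucNorm μ P : ℝ) : ℂ)‖ ^ 2))


theorem statement16
    (a b : ℕ → ℝ) (ha : ∀ n, 0 ≤ a n) (ha0 : a 0 = 0)
    (Atil Btil : ℝ)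
    (hb : Tendsto (fun n => b n) atTop (𝓝 Btil))
    (hm2 : Tendsto (fun n => a (n - 1) ^ 2 + b n ^ 2 + a n ^ 2) atTop (𝓝 Atil)) :
    (∃ C : ℝ, ∀ n, a n ≤ C ∧ |b n| ≤ C) ∧
    (∀ atil btil : ℤ → ℝ, ∀ nj : ℕ → ℕ, Tendsto nj atTop atTop →
      (∀ n : ℤ, Tendsto (fun j => a (n + nj j).toNat) atTop (𝓝 (atil n)) ∧
        Tendsto (fun j => b (n + nj j).toNat) atTop (𝓝 (btil n))) →
      ∃ a' c' : ℝ, 0 ≤ a' ∧ 0 ≤ c' ∧ a' ^ 2 + c' ^ 2 = Atil - Btil ^ 2 ∧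
        ∀ n : ℤ, atil (2 * n) = a' ∧ atil (2 * n + 1) = c' ∧ btil n = Btil) := by
  obtain ⟨Rb, hRb0, hRb⟩ := cauchySeq_bdd hb.cauchySeq
  obtain ⟨Rm, hRm0, hRm⟩ := cauchySeq_bdd hm2.cauchySeq
  constructor
  · refine ⟨max (Real.sqrt (a 0 ^ 2 + b 0 ^ 2 + a 0 ^ 2 + Rm)) (|b 0| + Rb),
      fun n => ⟨?_, ?_⟩⟩
    · refine le_max_of_le_left ?_
      rw [show a 0 ^ 2 + b 0 ^ 2 + a 0 ^ 2 = a (0 - 1) ^ 2 + b 0 ^ 2 + a 0 ^ 2 by norm_num]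
      rw [Real.le_sqrt (ha n)]
      have hd := hRm n 0
      have hle : a n ^ 2 ≤ a (n - 1) ^ 2 + b n ^ 2 + a n ^ 2 := by
        nlinarith [sq_nonneg (a (n - 1)), sq_nonneg (b n)]
      rw [Real.dist_eq] at hd
      have := abs_lt.mp hd
      · linarith
      · nlinarith [sq_nonneg (a (0 - 1)), sq_nonneg (b 0), sq_nonneg (a 0)]
    · refine le_max_of_le_right ?_
      have hd := hRb n 0
      rw [Real.dist_eq] at hd
      have := abs_lt.mp hd
      have h1 := abs_sub_abs_le_abs_sub (b n) (b 0)
      linarith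
  · intro atil btil nj hnj hc
    have hto : ∀ n : ℤ, Tendsto (fun j => (n + nj j).toNat) atTop atTop := by
      intro n
      rw [Filter.tendsto_atTop]
      intro K
      filter_upwards [hnj.eventually_ge_atTop (K + n.natAbs)] with j hj
      omega
    have hb' : ∀ n : ℤ, btil n = Btil := fun n =>
      tendsto_nhds_unique (hc n).2 (hb.comp (hto n))
    have hnn : ∀ n : ℤ, 0 ≤ atil n := fun n =>
      ge_of_tendsto' (hc n).1 (fun j => ha _)
    have hsum : ∀ n : ℤ, atil (n - 1) ^ 2 + btil n ^ 2 + atil n ^ 2 = Atil := by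
      intro n
      have h1 : Tendsto
          (fun j => a ((n - 1) + nj j).toNat ^ 2 + b (n + nj j).toNat ^ 2
            + a (n + nj j).toNat ^ 2) atTop
          (𝓝 (atil (n - 1) ^ 2 + btil n ^ 2 + atil n ^ 2)) :=
        (((hc (n - 1)).1.pow 2).add ((hc n).2.pow 2)).add ((hc n).1.pow 2)
      have h2 : Tendsto
          (fun j => a ((n + nj j).toNat - 1) ^ 2 + b (n + nj j).toNat ^ 2
            + a (n + nj j).toNat ^ 2) atTop (𝓝 Atil) := hm2.comp (hto n)
      refine tendsto_nhds_unique h1 (h2.congr' ?_)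
      filter_upwards [hnj.eventually_ge_atTop (n.natAbs + 2)] with j hj
      have e : (n + nj j).toNat - 1 = ((n - 1) + nj j).toNat := by omega
      rw [e]
    have hS : ∀ n : ℤ, atil (n - 1) ^ 2 + atil n ^ 2 = Atil - Btil ^ 2 := by
      intro n
      have := hsum n
      rw [hb' n] at this
      linarith
    have hstep : ∀ n : ℤ, atil (n + 2) = atil n := by
      intro n
      have h1 := hS (n + 1)
      have h2 := hS (n + 2)
      have e1 : (n + 1 - 1 : ℤ) = n := by ring
      have e2 : (n + 2 - 1 : ℤ) = n + 1 := by ring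
      rw [e1] at h1
      rw [e2] at h2
      have hsq : atil (n + 2) ^ 2 = atil n ^ 2 := by linarith
      calc atil (n + 2) = Real.sqrt (atil (n + 2) ^ 2) := (Real.sqrt_sq (hnn _)).symm
        _ = Real.sqrt (atil n ^ 2) := by rw [hsq]
        _ = atil n := Real.sqrt_sq (hnn _)
    have key : ∀ n : ℤ, atil (2 * n) = atil 0 ∧ atil (2 * n + 1) = atil 1 := by
      intro n
      induction n using Int.induction_on with
      | zero => norm_num
      | succ k ih =>
        constructor
        · rw [show (2 * ((k : ℤ) + 1)) = 2 * k + 2 by ring, hstep]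
          exact ih.1
        · rw [show (2 * ((k : ℤ) + 1) + 1) = (2 * k + 1) + 2 by ring, hstep]
          exact ih.2
      | pred k ih =>
        have h1 := hstep (2 * (-(k : ℤ) - 1))
        rw [show (2 * (-(k : ℤ) - 1) + 2) = 2 * (-(k : ℤ)) by ring] at h1
        have h2 := hstep (2 * (-(k : ℤ) - 1) + 1)
        rw [show (2 * (-(k : ℤ) - 1) + 1 + 2) = 2 * (-(k : ℤ)) + 1 by ring] at h2
        exact ⟨by rw [← h1]; exact ih.1, by rw [← h2]; exact ih.2⟩
    refine ⟨atil 0, atil 1, hnn 0, hnn 1, ?_, fun n => ⟨(key n).1, (key n).2, hb' n⟩⟩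
    have := hS 1
    norm_num at this
    linarith

end
end

section
/- Let μ be a probability measure on ∂𝔻 with infinite support, with monic orthogonal polynomials Φ_n, reversed polynomials Φ_n*, and Verblunsky coefficients (α_n)_{n≥0}. (a) If for some z₀ ∈ 𝔻, z₀ ≠ 0, the ratio asymptotics lim_{n→∞} Φ*_{n+1}(z₀)/Φ*_n(z₀) = 1 holds, then every right limit (β_n)_{n∈ℤ} of (α_n) has at most one nonzero entry (i.e., all right limits lie in the class 𝒦(∞)). (b) If the limits lim_{n→∞} Φ*_{n+1}(z_i)/Φ*_n(z_i) exist at two points z₁, z₂ ∈ 𝔻 \ {0} and neither limit equals 1, then there exists c ≠ 0 with |c| ≤ 1 such that every right limit (β_n)_{n∈ℤ} of (α_n) satisfies |β_n| = √|c| and conj(β_{n+1})·β_n = −c for all n ∈ ℤ; in particular, the right limit is unique up to multiplication by a constant phase and lies in the class 𝒦̃(c,1). -/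
open MeasureTheory Filter Metric Complex Set Topology

noncomputable section

/-! ### Auxiliary lemmas for `statement19` -/

section Statement19Aux

open Polynomial

private lemma reflect_sub' (f g : Polynomial ℂ) (N : ℕ) :
    (f - g).reflect N = f.reflect N - g.reflect N := by
  ext i; simp [Polynomial.coeff_reflect]

private lemma reflect_reflect_succ (P : Polynomial ℂ) (n : ℕ) (hP : P.natDegree ≤ n) :
    (P.reflect n).reflect (n+1) = Polynomial.X * P := by
  ext i
  rw [Polynomial.coeff_reflect, Polynomial.coeff_reflect]
  rcases i with _ | k
  · rw [Polynomial.revAt_zero, Polynomial.revAt_eq_self_of_lt (Nat.lt_succ_self n)]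
    rw [Polynomial.coeff_eq_zero_of_natDegree_lt (by omega : P.natDegree < n + 1)]
    simp [Polynomial.mul_coeff_zero]
  · rw [Polynomial.coeff_X_mul]
    by_cases hk : k ≤ n
    · rw [Polynomial.revAt_le (by omega : k + 1 ≤ n + 1)]
      rw [Polynomial.revAt_le (by omega : n + 1 - (k+1) ≤ n)]
      congr 1; omega
    · rw [Polynomial.revAt_eq_self_of_lt (by omega : n + 1 < k + 1),
        Polynomial.revAt_eq_self_of_lt (by omega : n < k + 1)]
      rw [Polynomial.coeff_eq_zero_of_natDegree_lt (by omega : P.natDegree < k + 1),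
        Polynomial.coeff_eq_zero_of_natDegree_lt (by omega : P.natDegree < k)]

private lemma szegoRev_succ' (P : Polynomial ℂ) (n : ℕ) (hP : P.natDegree ≤ n) (a : ℂ) :
    szegoRev (n+1) (Polynomial.X * P - Polynomial.C ((starRingEnd ℂ) a) * szegoRev n P)
      = szegoRev n P - Polynomial.C a * (Polynomial.X * P) := by
  unfold szegoRev
  rw [Polynomial.map_sub, Polynomial.map_mul, Polynomial.map_mul, Polynomial.map_X,
    Polynomial.map_C, reflect_sub']
  have h1 : (Polynomial.X * P.map (starRingEnd ℂ)).reflect (n+1)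
      = (P.map (starRingEnd ℂ)).reflect n := by
    have := Polynomial.reflect_mul (Polynomial.X : Polynomial ℂ) (P.map (starRingEnd ℂ))
      (Polynomial.natDegree_X_le) (Polynomial.natDegree_map_le.trans hP) (F := 1) (G := n)
    rw [show 1 + n = n + 1 by ring] at this
    rw [this]
    simp [Polynomial.reflect_monomial]
  have h2 : ((((P.map (starRingEnd ℂ)).reflect n).map (starRingEnd ℂ))).reflect (n+1)
      = Polynomial.X * P := by
    rw [← Polynomial.reflect_map, Polynomial.map_map]
    have : (starRingEnd ℂ).comp (starRingEnd ℂ) = RingHom.id ℂ := by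
      ext x; simp
    rw [this, Polynomial.map_id]
    exact reflect_reflect_succ P n hP
  rw [h1]
  congr 1
  rw [show ((starRingEnd ℂ) ((starRingEnd ℂ) a)) = a by simp]
  rw [Polynomial.reflect_C_mul, h2]

private lemma mobius_abs (a w q : ℂ) (ha : ‖a‖ < 1)
    (hw : ‖w‖ ≤ ‖q‖) :
    ‖w - (starRingEnd ℂ) a * q‖ ≤ ‖q - a * w‖ := by
  have key : Complex.normSq (q - a*w) - Complex.normSq (w - (starRingEnd ℂ) a * q)
      = (1 - Complex.normSq a) * (Complex.normSq q - Complex.normSq w) := by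
    simp only [Complex.normSq_apply, Complex.sub_re, Complex.sub_im, Complex.mul_re,
      Complex.mul_im, Complex.conj_re, Complex.conj_im]
    ring
  have h1 : Complex.normSq a < 1 := by
    rw [← Complex.sq_norm]; nlinarith [norm_nonneg a]
  have h2 : Complex.normSq w ≤ Complex.normSq q := by
    rw [← Complex.sq_norm, ← Complex.sq_norm]
    exact pow_le_pow_left₀ (norm_nonneg w) hw 2
  have h3 : Complex.normSq (w - (starRingEnd ℂ) a * q) ≤ Complex.normSq (q - a * w) := by
    nlinarith
  rw [Complex.norm_def, Complex.norm_def]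
  exact Real.sqrt_le_sqrt h3

private lemma q_succ' (Φ : ℕ → Polynomial ℂ) (α : ℕ → ℂ)
    (hdeg : ∀ n, (Φ n).natDegree = n)
    (hrec : ∀ n, Φ (n + 1) =
      Polynomial.X * Φ n - Polynomial.C ((starRingEnd ℂ) (α n)) * szegoRev n (Φ n))
    (n : ℕ) (z : ℂ) :
    (szegoRev (n+1) (Φ (n+1))).eval z
      = (szegoRev n (Φ n)).eval z - α n * (z * (Φ n).eval z) := by
  rw [hrec n, szegoRev_succ' (Φ n) n (le_of_eq (hdeg n)) (α n)]
  simp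

private lemma p_succ' (Φ : ℕ → Polynomial ℂ) (α : ℕ → ℂ)
    (hrec : ∀ n, Φ (n + 1) =
      Polynomial.X * Φ n - Polynomial.C ((starRingEnd ℂ) (α n)) * szegoRev n (Φ n))
    (n : ℕ) (z : ℂ) :
    (Φ (n+1)).eval z
      = z * (Φ n).eval z - (starRingEnd ℂ) (α n) * (szegoRev n (Φ n)).eval z := by
  rw [hrec n]; simp

private lemma pq_inv' (Φ : ℕ → Polynomial ℂ) (α : ℕ → ℂ)
    (hmono : ∀ n, (Φ n).Monic) (hdeg : ∀ n, (Φ n).natDegree = n)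
    (hα : ∀ n, ‖α n‖ < 1)
    (hrec : ∀ n, Φ (n + 1) =
      Polynomial.X * Φ n - Polynomial.C ((starRingEnd ℂ) (α n)) * szegoRev n (Φ n))
    (z : ℂ) (hz : ‖z‖ < 1) :
    ∀ n, (szegoRev n (Φ n)).eval z ≠ 0 ∧
      ‖(Φ n).eval z‖ ≤ ‖(szegoRev n (Φ n)).eval z‖ := by
  intro n
  induction n with
  | zero =>
    have h0 : Φ 0 = 1 := (hmono 0).natDegree_eq_zero.mp (hdeg 0)
    constructor
    · rw [h0]; unfold szegoRev; simp
    · rw [h0]; unfold szegoRev; simp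
  | succ n ih =>
    obtain ⟨hq, hpq⟩ := ih
    set p := (Φ n).eval z with hp_def
    set q := (szegoRev n (Φ n)).eval z with hq_def
    have hAZ : ‖α n‖ * ‖z‖ < 1 := by
      nlinarith [norm_nonneg (α n), norm_nonneg z, hα n]
    have habs : ‖α n * (z * p)‖ < ‖q‖ := by
      calc ‖α n * (z * p)‖
          = (‖α n‖ * ‖z‖) * ‖p‖ := by
            rw [norm_mul, norm_mul]; ring
        _ ≤ (‖α n‖ * ‖z‖) * ‖q‖ :=
            mul_le_mul_of_nonneg_left hpq (by positivity)
        _ < 1 * ‖q‖ := mul_lt_mul_of_pos_right hAZ ((norm_pos_iff.mpr hq))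
        _ = ‖q‖ := one_mul _
    have hqne : (szegoRev (n+1) (Φ (n+1))).eval z ≠ 0 := by
      rw [q_succ' Φ α hdeg hrec n z]
      intro h0
      have : q = α n * (z * p) := by
        have := sub_eq_zero.mp h0; exact this.symm ▸ rfl
      rw [← this] at habs
      exact lt_irrefl _ habs
    refine ⟨hqne, ?_⟩
    rw [q_succ' Φ α hdeg hrec n z, p_succ' Φ α hrec n z]
    have hw : ‖z * p‖ ≤ ‖q‖ := by
      calc ‖z * p‖ = ‖z‖ * ‖p‖ := norm_mul _ _
        _ ≤ 1 * ‖p‖ := mul_le_mul_of_nonneg_right hz.le (norm_nonneg p)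
        _ = ‖p‖ := one_mul _
        _ ≤ ‖q‖ := hpq
    exact mobius_abs (α n) (z * p) q (hα n) hw

private lemma extractZ (F : ℕ → ℤ → ℂ) (hF : ∀ j n, ‖F j n‖ ≤ 1) :
    ∃ ψ : ℕ → ℕ, StrictMono ψ ∧ ∃ L : ℤ → ℂ,
      ∀ n, Tendsto (fun j => F (ψ j) n) atTop (𝓝 (L n)) := by
  have hK : IsCompact (Set.univ.pi fun _ : ℤ => closedBall (0:ℂ) 1) :=
    isCompact_univ_pi fun _ => isCompact_closedBall _ _
  have hmem : ∀ j, F j ∈ Set.univ.pi fun _ : ℤ => closedBall (0:ℂ) 1 := by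
    intro j n _
    simpa [Complex.dist_eq] using hF j n
  obtain ⟨L, -, ψ, hψ, hconv⟩ := hK.isSeqCompact hmem
  exact ⟨ψ, hψ, L, fun n => (tendsto_pi_nhds.mp hconv n)⟩

private lemma exists_rl (α : ℕ → ℂ) (hα : ∀ n, ‖α n‖ < 1) :
    ∃ β : ℤ → ℂ, IsRightLimit α β := by
  obtain ⟨ψ, hψ, L, hL⟩ := extractZ (fun j n => α ((n + (j:ℤ)).toNat)) (fun j n => (hα _).le)
  exact ⟨L, ψ, hψ.tendsto_atTop, hL⟩

private lemma limit_eqs (Φ : ℕ → Polynomial ℂ) (α : ℕ → ℂ)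
    (hmono : ∀ n, (Φ n).Monic) (hdeg : ∀ n, (Φ n).natDegree = n)
    (hα : ∀ n, ‖α n‖ < 1)
    (hrec : ∀ n, Φ (n + 1) =
      Polynomial.X * Φ n - Polynomial.C ((starRingEnd ℂ) (α n)) * szegoRev n (Φ n))
    (z : ℂ) (hz : ‖z‖ < 1) (G : ℂ)
    (hG : Tendsto (fun n =>
        (szegoRev (n + 1) (Φ (n + 1))).eval z / (szegoRev n (Φ n)).eval z) atTop (𝓝 G))
    (β : ℤ → ℂ) (nj : ℕ → ℕ) (hnj : Tendsto nj atTop atTop)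
    (hβ : ∀ n : ℤ, Tendsto (fun j => α ((n + nj j).toNat)) atTop (𝓝 (β n))) :
    ∃ L : ℤ → ℂ, (∀ n, ‖L n‖ ≤ 1) ∧
      (∀ n, β n * (z * L n) = 1 - G) ∧
      (∀ n, L (n + 1) * (1 - β n * (z * L n)) = z * L n - (starRingEnd ℂ) (β n)) := by
  have hinv := pq_inv' Φ α hmono hdeg hα hrec z hz
  set p : ℕ → ℂ := fun m => (Φ m).eval z with hpd
  set q : ℕ → ℂ := fun m => (szegoRev m (Φ m)).eval z with hqd
  have hqne : ∀ m, q m ≠ 0 := fun m => (hinv m).1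
  set b : ℕ → ℂ := fun m => p m / q m with hbd
  have hb1 : ∀ m, ‖b m‖ ≤ 1 := by
    intro m
    show ‖p m / q m‖ ≤ 1
    rw [norm_div]
    exact div_le_one_of_le₀ (hinv m).2 (norm_nonneg _)
  have hq1 : ∀ m, q (m+1) = q m - α m * (z * p m) := fun m => q_succ' Φ α hdeg hrec m z
  have hp1 : ∀ m, p (m+1) = z * p m - (starRingEnd ℂ) (α m) * q m :=
    fun m => p_succ' Φ α hrec m z
  have hr : ∀ m, α m * (z * b m) = 1 - q (m+1) / q m := by
    intro m
    show α m * (z * (p m / q m)) = 1 - q (m+1) / q m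
    rw [hq1 m]
    field_simp [hqne m]
    ring
  have hbrec : ∀ m, b (m+1) * (1 - α m * (z * b m)) = z * b m - (starRingEnd ℂ) (α m) := by
    intro m
    show (p (m+1) / q (m+1)) * (1 - α m * (z * (p m / q m))) = z * (p m / q m) - _
    have h2 := hq1 m
    have h3 := hp1 m
    have hne : q m - α m * (z * p m) ≠ 0 := h2 ▸ hqne (m+1)
    rw [h2, h3]
    rw [div_mul_eq_mul_div, div_eq_iff hne]
    linear_combination ((starRingEnd ℂ) (α m) * α m * z * p m - z * p m) * mul_inv_cancel₀ (hqne m)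
  obtain ⟨ψ, hψ, L, hL⟩ := extractZ (fun j n => b ((n + nj j).toNat)) (fun j n => hb1 _)
  have hnjψ : Tendsto (fun j => nj (ψ j)) atTop atTop := hnj.comp hψ.tendsto_atTop
  have hm : ∀ n : ℤ, Tendsto (fun j => ((n + (nj (ψ j) : ℤ)).toNat)) atTop atTop := by
    intro n
    rw [tendsto_atTop_atTop]
    intro K
    obtain ⟨N, hN⟩ := (tendsto_atTop_atTop.mp hnjψ) (K + n.natAbs + 1)
    exact ⟨N, fun j hj => by have := hN j hj; omega⟩
  have hαm : ∀ n : ℤ, Tendsto (fun j => α ((n + (nj (ψ j) : ℤ)).toNat)) atTop (𝓝 (β n)) :=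
    fun n => (hβ n).comp hψ.tendsto_atTop
  have hbm : ∀ n : ℤ, Tendsto (fun j => b ((n + (nj (ψ j) : ℤ)).toNat)) atTop (𝓝 (L n)) :=
    fun n => hL n
  have hbm1 : ∀ n : ℤ,
      Tendsto (fun j => b ((n + (nj (ψ j) : ℤ)).toNat + 1)) atTop (𝓝 (L (n+1))) := by
    intro n
    apply (hL (n+1)).congr'
    filter_upwards [hnjψ.eventually_ge_atTop (n.natAbs + 1)] with j hj
    congr 1
    omega
  refine ⟨L, ?_, ?_, ?_⟩
  · exact fun n => le_of_tendsto ((continuous_norm.tendsto (L n)).comp (hbm n))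
      (Eventually.of_forall fun j => hb1 _)
  · intro n
    have t1 : Tendsto (fun j => α ((n + (nj (ψ j) : ℤ)).toNat)
          * (z * b ((n + (nj (ψ j) : ℤ)).toNat))) atTop (𝓝 (β n * (z * L n))) :=
      (hαm n).mul (tendsto_const_nhds.mul (hbm n))
    have t2 : Tendsto (fun j => α ((n + (nj (ψ j) : ℤ)).toNat)
          * (z * b ((n + (nj (ψ j) : ℤ)).toNat))) atTop (𝓝 (1 - G)) := by
      simp only [hr]
      exact tendsto_const_nhds.sub (hG.comp (hm n))
    exact tendsto_nhds_unique t1 t2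
  · intro n
    have t1 : Tendsto (fun j => b ((n + (nj (ψ j) : ℤ)).toNat + 1)
          * (1 - α ((n + (nj (ψ j) : ℤ)).toNat) * (z * b ((n + (nj (ψ j) : ℤ)).toNat))))
        atTop (𝓝 (L (n+1) * (1 - β n * (z * L n)))) :=
      (hbm1 n).mul (tendsto_const_nhds.sub ((hαm n).mul (tendsto_const_nhds.mul (hbm n))))
    have t2 : Tendsto (fun j => b ((n + (nj (ψ j) : ℤ)).toNat + 1)
          * (1 - α ((n + (nj (ψ j) : ℤ)).toNat) * (z * b ((n + (nj (ψ j) : ℤ)).toNat))))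
        atTop (𝓝 (z * L n - (starRingEnd ℂ) (β n))) := by
      simp only [hbrec]
      exact (tendsto_const_nhds.mul (hbm n)).sub ((continuous_conj.tendsto _).comp (hαm n))
    exact tendsto_nhds_unique t1 t2

private lemma G_lower (Φ : ℕ → Polynomial ℂ) (α : ℕ → ℂ)
    (hmono : ∀ n, (Φ n).Monic) (hdeg : ∀ n, (Φ n).natDegree = n)
    (hα : ∀ n, ‖α n‖ < 1)
    (hrec : ∀ n, Φ (n + 1) =
      Polynomial.X * Φ n - Polynomial.C ((starRingEnd ℂ) (α n)) * szegoRev n (Φ n))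
    (z : ℂ) (hz : ‖z‖ < 1) (G : ℂ)
    (hG : Tendsto (fun n =>
        (szegoRev (n + 1) (Φ (n + 1))).eval z / (szegoRev n (Φ n)).eval z) atTop (𝓝 G)) :
    1 - ‖z‖ ≤ ‖G‖ := by
  have hinv := pq_inv' Φ α hmono hdeg hα hrec z hz
  apply ge_of_tendsto ((continuous_norm.tendsto G).comp hG)
  apply Eventually.of_forall
  intro m
  set p := (Φ m).eval z with hp_def
  set q := (szegoRev m (Φ m)).eval z with hq_def
  have hqne : q ≠ 0 := (hinv m).1
  have hpq : ‖p‖ ≤ ‖q‖ := (hinv m).2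
  have hq1 : (szegoRev (m+1) (Φ (m+1))).eval z = q - α m * (z * p) :=
    q_succ' Φ α hdeg hrec m z
  show 1 - ‖z‖ ≤ ‖(szegoRev (m+1) (Φ (m+1))).eval z / q‖
  rw [hq1]
  have hb : ‖α m * (z * (p/q))‖ ≤ ‖z‖ := by
    rw [norm_mul, norm_mul, norm_div]
    have h1 : ‖p‖ / ‖q‖ ≤ 1 :=
      div_le_one_of_le₀ hpq (norm_nonneg _)
    have hat : ‖α m‖ * (‖p‖ / ‖q‖) ≤ 1 :=
      mul_le_one₀ (hα m).le
        (div_nonneg (norm_nonneg p) (norm_nonneg q)) h1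
    nlinarith [mul_le_mul_of_nonneg_left hat (norm_nonneg z),
      norm_nonneg z]
  have hform : (q - α m * (z * p)) / q = 1 - α m * (z * (p/q)) := by
    field_simp
  rw [hform]
  have := norm_sub_norm_le (1 : ℂ) (α m * (z * (p/q)))
  simp only [norm_one] at this
  linarith

private lemma packA (Φ : ℕ → Polynomial ℂ) (α : ℕ → ℂ)
    (hmono : ∀ n, (Φ n).Monic) (hdeg : ∀ n, (Φ n).natDegree = n)
    (hα : ∀ n, ‖α n‖ < 1)
    (hrec : ∀ n, Φ (n + 1) =
      Polynomial.X * Φ n - Polynomial.C ((starRingEnd ℂ) (α n)) * szegoRev n (Φ n))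
    (z : ℂ) (hz : ‖z‖ < 1) (hz0 : z ≠ 0)
    (hG : Tendsto (fun n =>
        (szegoRev (n + 1) (Φ (n + 1))).eval z / (szegoRev n (Φ n)).eval z) atTop (𝓝 1))
    (β : ℤ → ℂ) (hβrl : IsRightLimit α β) :
    {n : ℤ | β n ≠ 0}.Subsingleton := by
  obtain ⟨nj, hnj, hβ⟩ := hβrl
  obtain ⟨L, hLb, he1, he2⟩ := limit_eqs Φ α hmono hdeg hα hrec z hz 1 hG β nj hnj hβ
  have hβL : ∀ n, β n = 0 ∨ L n = 0 := by
    intro n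
    have h0 : β n * (z * L n) = 0 := by rw [he1 n]; ring
    rcases mul_eq_zero.mp h0 with h | h
    · exact Or.inl h
    · rcases mul_eq_zero.mp h with h' | h'
      · exact absurd h' hz0
      · exact Or.inr h'
  have noz : ∀ d : ℕ, ∀ a : ℤ, β a ≠ 0 → β (a + 1 + (d:ℤ)) ≠ 0 → False := by
    intro d
    induction d using Nat.strong_induction_on with
    | _ d IH =>
      intro a ha hb
      by_cases hE : ∃ e : ℕ, e < d ∧ β (a + 1 + (e:ℤ)) ≠ 0
      · obtain ⟨e, he, hne⟩ := hE
        exact IH e he a ha hne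
      · push_neg at hE
        have hLa : L a = 0 := (hβL a).resolve_left ha
        have hchain : ∀ e : ℕ, e ≤ d →
            L (a + 1 + (e:ℤ)) = z ^ e * (-(starRingEnd ℂ) (β a)) := by
          intro e
          induction e with
          | zero =>
            intro _
            have h := he2 a
            rw [hLa] at h
            simp only [mul_zero, sub_zero, zero_sub, mul_one] at h
            simpa using h
          | succ e ihe =>
            intro hle
            have he' : e < d := by omega
            have h0 : β (a + 1 + (e:ℤ)) = 0 := hE e he'
            have h := he2 (a + 1 + (e:ℤ))
            rw [h0] at h
            simp only [zero_mul, sub_zero, mul_one, map_zero] at h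
            have hidx : a + 1 + ((e:ℤ) + 1) = (a + 1 + (e:ℤ)) + 1 := by ring
            rw [show ((e+1 : ℕ) : ℤ) = (e:ℤ) + 1 by push_cast; ring, hidx, h,
              ihe (by omega)]
            ring
        have h1 : L (a + 1 + (d:ℤ)) = z ^ d * (-(starRingEnd ℂ) (β a)) := hchain d le_rfl
        have h2 : L (a + 1 + (d:ℤ)) = 0 := (hβL _).resolve_left hb
        rw [h2] at h1
        have hc : (starRingEnd ℂ) (β a) ≠ 0 := by
          intro h
          exact ha (by simpa using congrArg (starRingEnd ℂ) h)
        exact (mul_ne_zero (pow_ne_zero d hz0) (neg_ne_zero.mpr hc)) h1.symm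
  intro a ha b hb
  by_contra hab
  rcases lt_or_gt_of_ne hab with h | h
  · exact noz (b - a - 1).toNat a ha
      (by rw [show a + 1 + ((b - a - 1).toNat : ℤ) = b by omega]; exact hb)
  · exact noz (a - b - 1).toNat b hb
      (by rw [show b + 1 + ((a - b - 1).toNat : ℤ) = a by omega]; exact ha)

private lemma packB (Φ : ℕ → Polynomial ℂ) (α : ℕ → ℂ)
    (hmono : ∀ n, (Φ n).Monic) (hdeg : ∀ n, (Φ n).natDegree = n)
    (hα : ∀ n, ‖α n‖ < 1)
    (hrec : ∀ n, Φ (n + 1) =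
      Polynomial.X * Φ n - Polynomial.C ((starRingEnd ℂ) (α n)) * szegoRev n (Φ n))
    (z : ℂ) (hz : ‖z‖ < 1) (G : ℂ)
    (hG : Tendsto (fun n =>
        (szegoRev (n + 1) (Φ (n + 1))).eval z / (szegoRev n (Φ n)).eval z) atTop (𝓝 G))
    (hG1 : G ≠ 1)
    (β : ℤ → ℂ) (nj : ℕ → ℕ) (hnj : Tendsto nj atTop atTop)
    (hβ : ∀ n : ℤ, Tendsto (fun j => α ((n + nj j).toNat)) atTop (𝓝 (β n))) :
    (∀ n : ℤ, β n ≠ 0) ∧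
    (∀ n : ℤ, (1 - G) * G * β n
      = z * ((1 - G) * β (n+1)) - z * ((starRingEnd ℂ) (β n) * β n * β (n+1))) := by
  obtain ⟨L, hLb, he1, he2⟩ := limit_eqs Φ α hmono hdeg hα hrec z hz G hG β nj hnj hβ
  have hv : (1:ℂ) - G ≠ 0 := sub_ne_zero.mpr (fun h => hG1 h.symm)
  have hβne : ∀ n, β n ≠ 0 := by
    intro n h0
    apply hv
    rw [← he1 n, h0, zero_mul]
  refine ⟨hβne, fun n => ?_⟩
  have h2' := he2 n
  rw [he1 n] at h2'
  linear_combination (z * β n * β (n+1)) * h2' - (G * β n) * (he1 (n+1))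
    + (z * β (n+1)) * (he1 n)

end Statement19Aux


theorem statement19
    (μ : Measure ℝ) [IsProbabilityMeasure μ]
    (hμsupp : μ (Set.Ico 0 (2 * Real.pi))ᶜ = 0)
    (hμinf : ∀ F : Finset ℝ, μ (↑F : Set ℝ)ᶜ ≠ 0)
    (Φ : ℕ → Polynomial ℂ) (α : ℕ → ℂ)
    (hV : IsVerblunsky μ Φ α) :
    (∀ z₀ ∈ ball (0:ℂ) 1, z₀ ≠ 0 →
      Tendsto (fun n =>
          (szegoRev (n + 1) (Φ (n + 1))).eval z₀ / (szegoRev n (Φ n)).eval z₀)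
        atTop (𝓝 1) →
      ∀ β : ℤ → ℂ, IsRightLimit α β → {n : ℤ | β n ≠ 0}.Subsingleton) ∧
    (∀ z₁ ∈ ball (0:ℂ) 1, ∀ z₂ ∈ ball (0:ℂ) 1, z₁ ≠ 0 → z₂ ≠ 0 → z₁ ≠ z₂ →
      ∀ G₁ G₂ : ℂ,
      Tendsto (fun n =>
          (szegoRev (n + 1) (Φ (n + 1))).eval z₁ / (szegoRev n (Φ n)).eval z₁)
        atTop (𝓝 G₁) →
      Tendsto (fun n =>
          (szegoRev (n + 1) (Φ (n + 1))).eval z₂ / (szegoRev n (Φ n)).eval z₂)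
        atTop (𝓝 G₂) →
      G₁ ≠ 1 → G₂ ≠ 1 →
      ∃ c : ℂ, c ≠ 0 ∧ ‖c‖ ≤ 1 ∧
        ∀ β : ℤ → ℂ, IsRightLimit α β → ∀ n : ℤ,
          ‖β n‖ = Real.sqrt (‖c‖) ∧
          (starRingEnd ℂ) (β (n + 1)) * β n = -c) := by
  obtain ⟨hmono, hdeg, -, hα, hrec⟩ := hV
  constructor
  · -- Part (a)
    intro z₀ hz₀m hz₀0 hrat β hβrl
    have hz₀ : ‖z₀‖ < 1 := by
      simpa [Complex.dist_eq] using hz₀m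
    exact packA Φ α hmono hdeg hα hrec z₀ hz₀ hz₀0 hrat β hβrl
  · -- Part (b)
    intro z₁ hz₁m z₂ hz₂m hz₁0 hz₂0 hz12 G₁ G₂ hG1t hG2t hG1ne hG2ne
    have hz₁ : ‖z₁‖ < 1 := by simpa [Complex.dist_eq] using hz₁m
    have hz₂ : ‖z₂‖ < 1 := by simpa [Complex.dist_eq] using hz₂m
    have hG₁0 : G₁ ≠ 0 := by
      intro h
      have := G_lower Φ α hmono hdeg hα hrec z₁ hz₁ G₁ hG1t
      rw [h] at this
      simp at this
      linarith
    have hG₂0 : G₂ ≠ 0 := by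
      intro h
      have := G_lower Φ α hmono hdeg hα hrec z₂ hz₂ G₂ hG2t
      rw [h] at this
      simp at this
      linarith
    have hv₁ : (1:ℂ) - G₁ ≠ 0 := sub_ne_zero.mpr (fun h => hG1ne h.symm)
    have hv₂ : (1:ℂ) - G₂ ≠ 0 := sub_ne_zero.mpr (fun h => hG2ne h.symm)
    obtain ⟨β₀, hβ₀rl⟩ := exists_rl α hα
    by_cases hvv : (1:ℂ) - G₁ = 1 - G₂
    · -- degenerate case: impossible since a right limit exists
      exfalso
      have hGG : G₁ = G₂ := by linear_combination -hvv
      obtain ⟨nj, hnj, hβ⟩ := hβ₀rl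
      obtain ⟨hne1, hA1⟩ := packB Φ α hmono hdeg hα hrec z₁ hz₁ G₁ hG1t hG1ne β₀ nj hnj hβ
      obtain ⟨hne2, hA2⟩ := packB Φ α hmono hdeg hα hrec z₂ hz₂ G₂ hG2t hG2ne β₀ nj hnj hβ
      rw [← hGG] at hA2
      have hz12' : z₁ - z₂ ≠ 0 := sub_ne_zero.mpr hz12
      have hS : (1-G₁) * β₀ (0+1) - (starRingEnd ℂ) (β₀ 0) * β₀ 0 * β₀ (0+1) = 0 := by
        have hmul : (z₁ - z₂) * ((1-G₁) * β₀ (0+1)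
            - (starRingEnd ℂ) (β₀ 0) * β₀ 0 * β₀ (0+1)) = 0 := by
          linear_combination hA2 0 - hA1 0
        exact (mul_eq_zero.mp hmul).resolve_left hz12'
      have hzero : (1-G₁) * G₁ * β₀ 0 = 0 := by
        linear_combination hA1 0 + z₁ * hS
      exact (mul_ne_zero (mul_ne_zero hv₁ hG₁0) (hne1 0)) hzero
    · -- main case
      have hD0 : ((1:ℂ) - G₁) - (1 - G₂) ≠ 0 := sub_ne_zero.mpr hvv
      have hDp : z₁ * z₂ * ((1 - G₁) - (1 - G₂)) ≠ 0 :=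
        mul_ne_zero (mul_ne_zero hz₁0 hz₂0) hD0
      set Ep : ℂ := (1-G₁)*G₁*z₂ - (1-G₂)*G₂*z₁ with hEp_def
      set Dp : ℂ := z₁ * z₂ * ((1 - G₁) - (1 - G₂)) with hDp_def
      set s : ℂ := (z₁ * (1-G₁) * Ep - (1-G₁)*G₁*Dp) / (z₁ * Dp) with hs_def
      have hzDp : z₁ * Dp ≠ 0 := mul_ne_zero hz₁0 hDp
      -- main facts for an arbitrary right limit
      have main : ∀ β : ℤ → ℂ, IsRightLimit α β →
          (∀ n, β n ≠ 0) ∧ (∀ n, ‖β n‖ ≤ 1) ∧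
          (∀ n, Dp * β (n+1) = Ep * β n) ∧
          (∀ n, (starRingEnd ℂ) (β n) * β (n+1) = s) := by
        intro β hβrl
        obtain ⟨nj, hnj, hβ⟩ := hβrl
        obtain ⟨hne1, hA1⟩ := packB Φ α hmono hdeg hα hrec z₁ hz₁ G₁ hG1t hG1ne β nj hnj hβ
        obtain ⟨hne2, hA2⟩ := packB Φ α hmono hdeg hα hrec z₂ hz₂ G₂ hG2t hG2ne β nj hnj hβ
        have habs : ∀ n, ‖β n‖ ≤ 1 := fun n =>
          le_of_tendsto ((continuous_norm.tendsto _).comp (hβ n))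
            (Eventually.of_forall fun j => (hα _).le)
        have hstep : ∀ n, Dp * β (n+1) = Ep * β n := by
          intro n
          rw [hDp_def, hEp_def]
          linear_combination z₁ * hA2 n - z₂ * hA1 n
        refine ⟨hne1, habs, hstep, fun n => ?_⟩
        have h0 : β n * ((starRingEnd ℂ) (β n) * β (n+1) * (z₁ * Dp)
            - (z₁ * (1-G₁) * Ep - (1-G₁)*G₁*Dp)) = 0 := by
          rw [hEp_def, hDp_def]
          have hst := hstep n
          rw [hEp_def, hDp_def] at hst
          linear_combination (z₁ * z₂ * ((1 - G₁) - (1 - G₂))) * hA1 n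
            + (z₁ * (1 - G₁)) * hst
        have h1 := (mul_eq_zero.mp h0).resolve_left (hne1 n)
        have h2 : (starRingEnd ℂ) (β n) * β (n+1) * (z₁ * Dp)
            = z₁ * (1-G₁) * Ep - (1-G₁)*G₁*Dp := by linear_combination h1
        rw [hs_def, eq_div_iff hzDp]
        exact h2
      -- the witness gives `s ≠ 0` and `|s| ≤ 1` and `Ep ≠ 0`
      obtain ⟨hw_ne, hw_abs, hw_step, hw_s⟩ := main β₀ hβ₀rl
      have hs0 : s ≠ 0 := by
        rw [← hw_s 0]
        exact mul_ne_zero (fun h => (hw_ne 0) (by simpa using congrArg (starRingEnd ℂ) h))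
          (hw_ne 1)
      have hEp0 : Ep ≠ 0 := by
        intro h
        have h1 := hw_step 0
        rw [h, zero_mul] at h1
        have : β₀ 1 = 0 := by
          rcases mul_eq_zero.mp h1 with h' | h'
          · exact absurd h' hDp
          · exact h'
        exact (hw_ne 1) this
      have hsabs : ‖s‖ ≤ 1 := by
        rw [← hw_s 0, norm_mul, Complex.norm_conj]
        exact mul_le_one₀ (hw_abs 0) (norm_nonneg _) (hw_abs 1)
      refine ⟨-(starRingEnd ℂ) s, ?_, ?_, ?_⟩
      · intro h
        apply hs0
        have := neg_eq_zero.mp h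
        simpa using congrArg (starRingEnd ℂ) this
      · simpa [Complex.norm_conj] using hsabs
      · intro β hβrl n
        obtain ⟨hne, habs, hstep, hS⟩ := main β hβrl
        have habsc : ‖-(starRingEnd ℂ) s‖ = ‖s‖ := by
          simp [Complex.norm_conj]
        constructor
        · -- |β n| = sqrt |c|
          have hnsq : ∀ m : ℤ, ((Complex.normSq (β m) : ℂ)) * Ep = Dp * s := by
            intro m
            have hc : β m * (starRingEnd ℂ) (β m) = (Complex.normSq (β m) : ℂ) :=
              Complex.mul_conj (β m)
            linear_combination (-Ep) * hc - (starRingEnd ℂ) (β m) * hstep m + Dp * hS m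
          have heqn : Complex.normSq (β n) = Complex.normSq (β (n+1)) := by
            have e1 := hnsq n
            have e2 := hnsq (n+1)
            have h3 : ((Complex.normSq (β n) : ℂ)) = ((Complex.normSq (β (n+1)) : ℂ)) :=
              mul_right_cancel₀ hEp0 (e1.trans e2.symm)
            exact_mod_cast h3
          have h1 : ‖β n‖ = ‖β (n+1)‖ := by
            rw [Complex.norm_def, Complex.norm_def, heqn]
          have h2 : ‖β n‖ * ‖β (n+1)‖ = ‖s‖ := by
            rw [← hS n, norm_mul, Complex.norm_conj]
          rw [habsc, ← h2, ← h1]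
          exact (Real.sqrt_mul_self (norm_nonneg _)).symm
        · -- conj (β (n+1)) * β n = -c
          have := congrArg (starRingEnd ℂ) (hS n)
          simp only [map_mul, Complex.conj_conj] at this
          rw [neg_neg]
          linear_combination this


end
end
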